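/- In the unique-optimal-policy case, on the bonus-validity event, if at state s_h the PVI greedy action π^PVI_k(s_h) is not optimal, then V_h*(s_h) − V̈^{π*}_{k,h}(s_h) ≥ (1/2)(V_h*(s_h) − V̂_{k,h}(s_h)), where V̈^{π*} is the clipped value with threshold ε_Clip = Δ_min/(2H+2). -/

import Mathlib

open Finset MeasureTheory Classical
open scoped Classical

/-- A finite-horizon tabular MDP with horizon `H`, fixed initial state `s0`,
time-dependent transition kernel `P` and deterministic rewards `r` in `[0,1]`.
Steps are indexed `1, …, H` (so value functions live on `1, …, H+1`). -/
structure TabMDP (S A : Type) [Fintype S] [Fintype A] where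
  H : ℕ
  s0 : S
  P : ℕ → S → A → S → ℝ
  r : ℕ → S → A → ℝ
  P_nonneg : ∀ h s a s', 0 ≤ P h s a s'
  P_sum_one : ∀ h s a, ∑ s', P h s a s' = 1
  r_nonneg : ∀ h s a, 0 ≤ r h s a
  r_le_one : ∀ h s a, r h s a ≤ 1

namespace TabMDP

variable {S A : Type} [Fintype S] [Nonempty S] [Fintype A] [Nonempty A]

/-- Value function of a deterministic policy, computed with `n` remaining steps starting
at step `h`: `Vfuel M π n h s = E_π[∑_{h'=h}^{h+n-1} r(s_{h'},a_{h'}) | s_h = s]`. -/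
noncomputable def Vfuel (M : TabMDP S A) (π : ℕ → S → A) : ℕ → ℕ → S → ℝ
  | 0, _, _ => 0
  | n + 1, h, s =>
      M.r h s (π h s) + ∑ s', M.P h s (π h s) s' * Vfuel M π n (h + 1) s'

/-- `V M π h s = V^π_h(s)`, for `1 ≤ h ≤ H+1`. -/
noncomputable def V (M : TabMDP S A) (π : ℕ → S → A) (h : ℕ) (s : S) : ℝ :=
  Vfuel M π (M.H + 1 - h) h s

/-- Q-function of a deterministic policy. -/
noncomputable def Q (M : TabMDP S A) (π : ℕ → S → A) (h : ℕ) (s : S) (a : A) : ℝ :=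
  M.r h s a + ∑ s', M.P h s a s' * V M π (h + 1) s'

/-- Optimal value function with `n` remaining steps. -/
noncomputable def VstarFuel (M : TabMDP S A) : ℕ → ℕ → S → ℝ
  | 0, _, _ => 0
  | n + 1, h, s =>
      ⨆ a : A, (M.r h s a + ∑ s', M.P h s a s' * VstarFuel M n (h + 1) s')

/-- `Vstar M h s = V^*_h(s)`. -/
noncomputable def Vstar (M : TabMDP S A) (h : ℕ) (s : S) : ℝ :=
  VstarFuel M (M.H + 1 - h) h s

/-- Optimal Q-function `Q^*_h(s,a)`. -/
noncomputable def Qstar (M : TabMDP S A) (h : ℕ) (s : S) (a : A) : ℝ :=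
  M.r h s a + ∑ s', M.P h s a s' * Vstar M (h + 1) s'

/-- Suboptimality gap `Δ_h(s,a) = V^*_h(s) - Q^*_h(s,a)`. -/
noncomputable def gap (M : TabMDP S A) (h : ℕ) (s : S) (a : A) : ℝ :=
  Vstar M h s - Qstar M h s a

/-- A deterministic policy is optimal if it achieves the optimal value at the initial state. -/
def IsOptimal (M : TabMDP S A) (π : ℕ → S → A) : Prop :=
  V M π 1 M.s0 = Vstar M 1 M.s0

/-- State occupancy `d^π(s_h) = Pr(S_h = s_h | S_1 = s0, π)`, for `1 ≤ h ≤ H`. -/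
noncomputable def stateOcc (M : TabMDP S A) (π : ℕ → S → A) : ℕ → S → ℝ
  | 0 => fun _ => 0
  | 1 => fun s => if s = M.s0 then 1 else 0
  | h + 2 => fun s' => ∑ s, stateOcc M π (h + 1) s * M.P (h + 1) s (π (h + 1) s) s'

/-- State-action occupancy `d^π(s_h, a_h)` of a deterministic policy. -/
noncomputable def occ (M : TabMDP S A) (π : ℕ → S → A) (h : ℕ) (s : S) (a : A) : ℝ :=
  if π h s = a then stateOcc M π h s else 0

/-- Expected sum of a per-step function along trajectories of `π` started at `(h,s)` with
`n` remaining steps: `pathSum M π g n h s = E_π[∑_{h'=h}^{h+n-1} g(h', s_{h'}, a_{h'}) | s_h = s]`. -/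
noncomputable def pathSum (M : TabMDP S A) (π : ℕ → S → A) (g : ℕ → S → A → ℝ) :
    ℕ → ℕ → S → ℝ
  | 0, _, _ => 0
  | n + 1, h, s =>
      g h s (π h s) + ∑ s', M.P h s (π h s) s' * pathSum M π g n (h + 1) s'

/-- `E_{π_k}[∑_{h'} 𝟙[Ẽ_{h'}] g(h', s_{h'})]` where `Ẽ_{h'}` is the event that step `h'` is the
first step along the trajectory (generated by `πk`) at which `πk(s_{h'}) ≠ π(s_{h'})`;
computed by the recursion that stops and pays `g h s` at the first disagreeing state. -/
noncomputable def firstDisagreeExp (M : TabMDP S A) (πk π : ℕ → S → A) (g : ℕ → S → ℝ) :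
    ℕ → ℕ → S → ℝ
  | 0, _, _ => 0
  | n + 1, h, s =>
      if πk h s ≠ π h s then g h s
      else ∑ s', M.P h s (πk h s) s' * firstDisagreeExp M πk π g n (h + 1) s'

/-- Probability, under trajectories of `πk` started at `s0` at step 1, that `πk` disagrees
with `π` at some visited state within steps `1, …, H`. -/
noncomputable def disagreeProb (M : TabMDP S A) (πk π : ℕ → S → A) : ℝ :=
  firstDisagreeExp M πk π (fun _ _ => 1) M.H 1 M.s0

/-! ### Stochastic policies -/

/-- A stochastic policy `πs h s a` = probability of taking `a` at state `s`, step `h`. -/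
def IsStochasticPolicy (πs : ℕ → S → A → ℝ) : Prop :=
  ∀ h s, (∀ a, 0 ≤ πs h s a) ∧ ∑ a, πs h s a = 1

/-- State occupancy of a stochastic policy. -/
noncomputable def stateOccS (M : TabMDP S A) (πs : ℕ → S → A → ℝ) : ℕ → S → ℝ
  | 0 => fun _ => 0
  | 1 => fun s => if s = M.s0 then 1 else 0
  | h + 2 => fun s' =>
      ∑ s, ∑ a, stateOccS M πs (h + 1) s * πs (h + 1) s a * M.P (h + 1) s a s'

/-- State-action occupancy of a stochastic policy. -/
noncomputable def occS (M : TabMDP S A) (πs : ℕ → S → A → ℝ) (h : ℕ) (s : S) (a : A) : ℝ :=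
  stateOccS M πs h s * πs h s a

/-- Value function of a stochastic policy (with fuel). -/
noncomputable def VSfuel (M : TabMDP S A) (πs : ℕ → S → A → ℝ) : ℕ → ℕ → S → ℝ
  | 0, _, _ => 0
  | n + 1, h, s =>
      ∑ a, πs h s a * (M.r h s a + ∑ s', M.P h s a s' * VSfuel M πs n (h + 1) s')

/-- Value of a stochastic policy. -/
noncomputable def VS (M : TabMDP S A) (πs : ℕ → S → A → ℝ) (h : ℕ) (s : S) : ℝ :=
  VSfuel M πs (M.H + 1 - h) h s

/-- A stochastic policy is optimal if it achieves the optimal value at the initial state. -/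
def IsOptimalS (M : TabMDP S A) (πs : ℕ → S → A → ℝ) : Prop :=
  VS M πs 1 M.s0 = Vstar M 1 M.s0

/-- `d^*_{h,min}(s_h,a_h)`: the minimal positive occupancy of `(s_h,a_h)` over deterministic
optimal policies that reach `(s_h, a_h)`. -/
noncomputable def dhmin (M : TabMDP S A) (h : ℕ) (s : S) (a : A) : ℝ :=
  sInf {x : ℝ | ∃ π : ℕ → S → A, IsOptimal M π ∧ occ M π h s a = x ∧ 0 < x}

/-- `Z_{h,div}`: state-action pairs whose state is reachable by some deterministic optimal
policy but unreachable by some other deterministic optimal policy. -/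
def Zdiv (M : TabMDP S A) (h : ℕ) : Set (S × A) :=
  {p | ∃ π π' : ℕ → S → A, IsOptimal M π ∧ IsOptimal M π' ∧
        0 < stateOcc M π h p.1 ∧ stateOcc M π' h p.1 = 0}

/-! ### Pessimistic value iteration -/

/-- PVI pessimistic value estimate (with fuel), given the empirical model `Phat` and
bonus `b`:  `V̂_h(s) = max_a max{r(s,a) + P̂_h V̂_{h+1}(s,a) - b_h(s,a), 0}`. -/
noncomputable def VhatFuel (M : TabMDP S A) (Phat : ℕ → S → A → S → ℝ)
    (b : ℕ → S → A → ℝ) : ℕ → ℕ → S → ℝ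
  | 0, _, _ => 0
  | n + 1, h, s =>
      ⨆ a : A,
        max (M.r h s a + (∑ s', Phat h s a s' * VhatFuel M Phat b n (h + 1) s') - b h s a) 0

/-- `V̂_h(s)`, the PVI pessimistic value estimate. -/
noncomputable def Vhat (M : TabMDP S A) (Phat : ℕ → S → A → S → ℝ)
    (b : ℕ → S → A → ℝ) (h : ℕ) (s : S) : ℝ :=
  VhatFuel M Phat b (M.H + 1 - h) h s

/-- `Q̂_h(s,a) = max{r(s,a) + P̂_h V̂_{h+1}(s,a) - b_h(s,a), 0}`, the PVI pessimistic
Q estimate. -/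
noncomputable def Qhat (M : TabMDP S A) (Phat : ℕ → S → A → S → ℝ)
    (b : ℕ → S → A → ℝ) (h : ℕ) (s : S) (a : A) : ℝ :=
  max (M.r h s a + (∑ s', Phat h s a s' * Vhat M Phat b (h + 1) s') - b h s a) 0

/-- PVI surplus `E_h(s,a) := r(s,a) + P_h V̂_{h+1}(s,a) - Q̂_h(s,a)`. -/
noncomputable def surplus (M : TabMDP S A) (Phat : ℕ → S → A → S → ℝ)
    (b : ℕ → S → A → ℝ) (h : ℕ) (s : S) (a : A) : ℝ :=
  M.r h s a + (∑ s', M.P h s a s' * Vhat M Phat b (h + 1) s') - Qhat M Phat b h s a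

/-- Value of a deterministic policy for the reward `r - Ebar` (clipped-surplus value `V̈`),
with fuel. -/
noncomputable def VclipFuel (M : TabMDP S A) (π : ℕ → S → A) (Ebar : ℕ → S → A → ℝ) :
    ℕ → ℕ → S → ℝ
  | 0, _, _ => 0
  | n + 1, h, s =>
      (M.r h s (π h s) - Ebar h s (π h s)) +
        ∑ s', M.P h s (π h s) s' * VclipFuel M π Ebar n (h + 1) s'

/-- `V̈^π_h(s)`: value of `π` when the reward is reduced by `Ebar`. -/
noncomputable def Vclip (M : TabMDP S A) (π : ℕ → S → A) (Ebar : ℕ → S → A → ℝ)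
    (h : ℕ) (s : S) : ℝ :=
  VclipFuel M π Ebar (M.H + 1 - h) h s

end TabMDP

/-- `Clip[x | ε] := x · 𝟙[x ≥ ε]`. -/
noncomputable def clip (x ε : ℝ) : ℝ := if ε ≤ x then x else 0

namespace TabMDP

variable {S A : Type} [Fintype S] [Nonempty S] [Fintype A] [Nonempty A]

lemma aux_sum_le (M : TabMDP S A) (h : ℕ) (s : S) (a : A) {f g : S → ℝ}
    (hfg : ∀ s', f s' ≤ g s') :
    ∑ s', M.P h s a s' * f s' ≤ ∑ s', M.P h s a s' * g s' :=
  Finset.sum_le_sum fun s' _ => mul_le_mul_of_nonneg_left (hfg s') (M.P_nonneg h s a s')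

lemma aux_Vfuel_nonneg (M : TabMDP S A) (π : ℕ → S → A) :
    ∀ n h s, 0 ≤ Vfuel M π n h s := by
  intro n
  induction n with
  | zero => intro h s; simp [Vfuel]
  | succ n ih =>
    intro h s
    show 0 ≤ M.r h s (π h s) + ∑ s', M.P h s (π h s) s' * Vfuel M π n (h + 1) s'
    exact add_nonneg (M.r_nonneg _ _ _) (Finset.sum_nonneg fun s' _ =>
      mul_nonneg (M.P_nonneg _ _ _ _) (ih _ _))

lemma aux_Vfuel_le_star (M : TabMDP S A) (π : ℕ → S → A) :
    ∀ n h s, Vfuel M π n h s ≤ VstarFuel M n h s := by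
  intro n
  induction n with
  | zero => intro h s; simp [Vfuel, VstarFuel]
  | succ n ih =>
    intro h s
    show M.r h s (π h s) + ∑ s', M.P h s (π h s) s' * Vfuel M π n (h + 1) s' ≤
      ⨆ a : A, (M.r h s a + ∑ s', M.P h s a s' * VstarFuel M n (h + 1) s')
    calc M.r h s (π h s) + ∑ s', M.P h s (π h s) s' * Vfuel M π n (h + 1) s'
        ≤ M.r h s (π h s) + ∑ s', M.P h s (π h s) s' * VstarFuel M n (h + 1) s' := by
          exact add_le_add_right (aux_sum_le M h s (π h s) fun s' => ih _ s') _
      _ ≤ ⨆ a : A, (M.r h s a + ∑ s', M.P h s a s' * VstarFuel M n (h + 1) s') :=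
          le_ciSup (f := fun a : A => M.r h s a + ∑ s', M.P h s a s' * VstarFuel M n (h + 1) s')
            (Set.Finite.bddAbove (Set.finite_range _)) (π h s)

lemma aux_V_unfold (M : TabMDP S A) (π : ℕ → S → A) (h : ℕ) (hhH : h ≤ M.H) (s : S) :
    V M π h s = M.r h s (π h s) + ∑ s', M.P h s (π h s) s' * V M π (h + 1) s' := by
  have h1 : M.H + 1 - h = (M.H - h) + 1 := by omega
  have hfe : ∀ s', V M π (h + 1) s' = Vfuel M π (M.H - h) (h + 1) s' := by
    intro s'; rw [V]; congr 1; omega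
  rw [V, h1]
  simp_rw [hfe]
  rfl

lemma aux_V_le_Vstar (M : TabMDP S A) (π : ℕ → S → A) (h : ℕ) (s : S) :
    V M π h s ≤ Vstar M h s :=
  aux_Vfuel_le_star M π _ h s

/-- The pessimistic estimate is at most the greedy policy's value, on the event. -/
lemma aux_pessimism (M : TabMDP S A) (Phat : ℕ → S → A → S → ℝ) (b : ℕ → S → A → ℝ)
    (πg : ℕ → S → A)
    (hgreedy : ∀ h s, Vhat M Phat b h s = Qhat M Phat b h s (πg h s))
    (hevent : ∀ h s a, 1 ≤ h → h ≤ M.H →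
      |(∑ s', Phat h s a s' * Vhat M Phat b (h + 1) s') -
          ∑ s', M.P h s a s' * Vhat M Phat b (h + 1) s'| < b h s a) :
    ∀ n h s, h + n = M.H + 1 → 1 ≤ h → Vhat M Phat b h s ≤ V M πg h s := by
  intro n
  induction n with
  | zero =>
    intro h s hn _
    have h1 : M.H + 1 - h = 0 := by omega
    rw [Vhat, V, h1]
    simp [VhatFuel, Vfuel]
  | succ n ih =>
    intro h s hn hh1
    have hhH : h ≤ M.H := by omega
    rw [hgreedy h s, Qhat]
    rcases max_cases (M.r h s (πg h s) +
        (∑ s', Phat h s (πg h s) s' * Vhat M Phat b (h + 1) s') - b h s (πg h s)) 0 with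
      ⟨heq, _⟩ | ⟨heq, _⟩
    · rw [heq]
      have hev := hevent h s (πg h s) hh1 hhH
      have habs := (abs_lt.mp hev).2
      have hstep : ∀ s', Vhat M Phat b (h + 1) s' ≤ V M πg (h + 1) s' := fun s' =>
        ih (h + 1) s' (by omega) (by omega)
      have := aux_sum_le M h s (πg h s) hstep
      rw [aux_V_unfold M πg h hhH s]
      linarith
    · rw [heq, aux_V_unfold M πg h hhH s]
      exact add_nonneg (M.r_nonneg _ _ _) (Finset.sum_nonneg fun s' _ =>
        mul_nonneg (M.P_nonneg _ _ _ _) (aux_Vfuel_nonneg M πg _ _ s'))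

lemma aux_Qhat_le_Vhat (M : TabMDP S A) (Phat : ℕ → S → A → S → ℝ) (b : ℕ → S → A → ℝ)
    (h : ℕ) (hhH : h ≤ M.H) (s : S) (a : A) :
    Qhat M Phat b h s a ≤ Vhat M Phat b h s := by
  have h1 : M.H + 1 - h = (M.H - h) + 1 := by omega
  have h2 : M.H + 1 - (h + 1) = M.H - h := by omega
  rw [Vhat, h1]
  show _ ≤ ⨆ a' : A,
    max (M.r h s a' + (∑ s', Phat h s a' s' * VhatFuel M Phat b (M.H - h) (h + 1) s')
      - b h s a') 0
  have hfe : ∀ s', VhatFuel M Phat b (M.H - h) (h + 1) s' = Vhat M Phat b (h + 1) s' := by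
    intro s'; rw [Vhat, h2]
  have : Qhat M Phat b h s a =
      max (M.r h s a + (∑ s', Phat h s a s' * VhatFuel M Phat b (M.H - h) (h + 1) s')
        - b h s a) 0 := by
    rw [Qhat]; simp_rw [hfe]
  rw [this]
  exact le_ciSup (f := fun a' : A =>
      max (M.r h s a' + (∑ s', Phat h s a' s' * VhatFuel M Phat b (M.H - h) (h + 1) s')
        - b h s a') 0)
    (Set.Finite.bddAbove (Set.finite_range _)) a

lemma aux_clip_ge (x ε : ℝ) (hε : 0 ≤ ε) : x - ε ≤ clip x ε := by
  rw [clip]; split <;> linarith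

/-- Clipping lemma: `V̈^π_h(s) ≤ V̂_h(s) + n ε` where `n` is the remaining fuel. -/
lemma aux_clip_lemma (M : TabMDP S A) (Phat : ℕ → S → A → S → ℝ) (b : ℕ → S → A → ℝ)
    (π : ℕ → S → A) (ε : ℝ) (hε : 0 ≤ ε) :
    ∀ n h s, h + n = M.H + 1 →
      Vclip M π (fun h' s' a' => clip (surplus M Phat b h' s' a') ε) h s ≤
        Vhat M Phat b h s + n * ε := by
  intro n
  induction n with
  | zero =>
    intro h s hn
    have h1 : M.H + 1 - h = 0 := by omega
    rw [Vclip, Vhat, h1]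
    simp [VclipFuel, VhatFuel]
  | succ n ih =>
    intro h s hn
    have hhH : h ≤ M.H := by omega
    have h1 : M.H + 1 - h = n + 1 := by omega
    have h2 : M.H + 1 - (h + 1) = n := by omega
    set a := π h s
    have hunfold : Vclip M π (fun h' s' a' => clip (surplus M Phat b h' s' a') ε) h s =
        (M.r h s a - clip (surplus M Phat b h s a) ε) +
          ∑ s', M.P h s a s' *
            Vclip M π (fun h' s' a' => clip (surplus M Phat b h' s' a') ε) (h + 1) s' := by
      rw [Vclip, h1]
      show (M.r h s a - clip (surplus M Phat b h s a) ε) +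
          ∑ s', M.P h s a s' *
            VclipFuel M π (fun h' s' a' => clip (surplus M Phat b h' s' a') ε) n (h + 1) s' = _
      simp_rw [Vclip, h2]
    rw [hunfold]
    have hclip : surplus M Phat b h s a - ε ≤ clip (surplus M Phat b h s a) ε :=
      aux_clip_ge _ _ hε
    have hsdef : surplus M Phat b h s a = M.r h s a +
        (∑ s', M.P h s a s' * Vhat M Phat b (h + 1) s') - Qhat M Phat b h s a := rfl
    have hsum : ∑ s', M.P h s a s' *
          Vclip M π (fun h' s' a' => clip (surplus M Phat b h' s' a') ε) (h + 1) s' ≤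
        ∑ s', M.P h s a s' * (Vhat M Phat b (h + 1) s' + n * ε) :=
      aux_sum_le M h s a fun s' => ih (h + 1) s' (by omega)
    have hsum2 : ∑ s', M.P h s a s' * (Vhat M Phat b (h + 1) s' + n * ε) =
        (∑ s', M.P h s a s' * Vhat M Phat b (h + 1) s') + n * ε := by
      simp_rw [mul_add, Finset.sum_add_distrib, ← Finset.sum_mul, M.P_sum_one h s a, one_mul]
    have hQV : Qhat M Phat b h s a ≤ Vhat M Phat b h s :=
      aux_Qhat_le_Vhat M Phat b h hhH s a
    have : ((n : ℝ) + 1) * ε = n * ε + ε := by ring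
    push_cast
    linarith
  
end TabMDP

/-- Unique-optimal-policy case: on the bonus-validity event, if at `(h, s_h)` the PVI greedy
action is not optimal, then with clipping threshold `ε_Clip = Δmin/(2H+2)`:
`V_h^*(s_h) − V̈^{π*}_h(s_h) ≥ (1/2)(V_h^*(s_h) − V̂_h(s_h))`. -/
theorem pvi_unique_opt_one_step
    {S A : Type} [Fintype S] [Nonempty S] [Fintype A] [Nonempty A]
    (M : TabMDP S A) (Phat : ℕ → S → A → S → ℝ) (b : ℕ → S → A → ℝ)
    (πg : ℕ → S → A)
    (hgreedy : ∀ h s, TabMDP.Vhat M Phat b h s = TabMDP.Qhat M Phat b h s (πg h s))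
    (Δmin : ℝ) (hΔmin : 0 < Δmin)
    (hgap : ∀ h s a, 1 ≤ h → h ≤ M.H → TabMDP.gap M h s a = 0 ∨ Δmin ≤ TabMDP.gap M h s a)
    (hevent : ∀ h s a, 1 ≤ h → h ≤ M.H →
      |(∑ s', Phat h s a s' * TabMDP.Vhat M Phat b (h + 1) s') -
          ∑ s', M.P h s a s' * TabMDP.Vhat M Phat b (h + 1) s'| < b h s a)
    (πst : ℕ → S → A) (hopt : ∀ h s, TabMDP.V M πst h s = TabMDP.Vstar M h s)
    (huniq : ∀ π' : ℕ → S → A, TabMDP.IsOptimal M π' →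
      ∀ h s a, TabMDP.occ M π' h s a = TabMDP.occ M πst h s a)
    (h : ℕ) (s : S) (hh1 : 1 ≤ h) (hhH : h ≤ M.H)
    (hsubopt : TabMDP.gap M h s (πg h s) ≠ 0) :
    (1 / 2) * (TabMDP.Vstar M h s - TabMDP.Vhat M Phat b h s) ≤
      TabMDP.Vstar M h s -
        TabMDP.Vclip M πst
          (fun h' s' a' =>
            clip (TabMDP.surplus M Phat b h' s' a') (Δmin / (2 * (M.H : ℝ) + 2))) h s := by
  set ε : ℝ := Δmin / (2 * (M.H : ℝ) + 2) with hεdef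
  have hH1 : (0 : ℝ) < 2 * (M.H : ℝ) + 2 := by positivity
  have hε : 0 ≤ ε := le_of_lt (div_pos hΔmin hH1)
  -- pessimism: V̂ ≤ V^{πg} ≤ Q*(·, πg) = V* − gap
  have hpess : TabMDP.Vhat M Phat b h s ≤ TabMDP.V M πg h s :=
    TabMDP.aux_pessimism M Phat b πg hgreedy hevent (M.H + 1 - h) h s (by omega) hh1
  have hVQ : TabMDP.V M πg h s ≤ TabMDP.Qstar M h s (πg h s) := by
    rw [TabMDP.aux_V_unfold M πg h hhH s, TabMDP.Qstar]
    exact add_le_add_right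
      (TabMDP.aux_sum_le M h s (πg h s) fun s' => TabMDP.aux_V_le_Vstar M πg (h + 1) s') _
  have hgapge : Δmin ≤ TabMDP.gap M h s (πg h s) := by
    rcases hgap h s (πg h s) hh1 hhH with h0 | h1
    · exact absurd h0 hsubopt
    · exact h1
  have hD : Δmin ≤ TabMDP.Vstar M h s - TabMDP.Vhat M Phat b h s := by
    rw [TabMDP.gap] at hgapge; linarith
  -- clipping lemma
  have hclip : TabMDP.Vclip M πst
      (fun h' s' a' => clip (TabMDP.surplus M Phat b h' s' a') ε) h s ≤
      TabMDP.Vhat M Phat b h s + (M.H + 1 - h : ℕ) * ε :=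
    TabMDP.aux_clip_lemma M Phat b πst ε hε (M.H + 1 - h) h s (by omega)
  have hnle : ((M.H + 1 - h : ℕ) : ℝ) * ε ≤ Δmin / 2 := by
    have h1 : ((M.H + 1 - h : ℕ) : ℝ) ≤ (M.H : ℝ) + 1 := by
      have : (M.H + 1 - h : ℕ) ≤ M.H + 1 := by omega
      exact_mod_cast this
    have h2 : ((M.H : ℝ) + 1) * ε = Δmin / 2 := by
      rw [hεdef]; field_simp
    calc ((M.H + 1 - h : ℕ) : ℝ) * ε ≤ ((M.H : ℝ) + 1) * ε :=
          mul_le_mul_of_nonneg_right h1 hε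
      _ = Δmin / 2 := h2
  linarith
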